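/- Let $\mathfrak{g} = \mathfrak{h} \oplus \mathfrak{m}$ be a reductive decomposition with $B(\mathfrak{h},\mathfrak{m}) = 0$ ($B$ the Killing form) satisfying the GO-property for an $\operatorname{ad}(\mathfrak{h})$-invariant inner product $(\cdot,\cdot)$ on $\mathfrak{m}$. Then for every $Y \in C_{\mathfrak{g}}(\mathfrak{h}) \cap \mathfrak{m}$, the operator $\operatorname{ad}(Y)|_{\mathfrak{m}}$ (composed with projection to $\mathfrak{m}$) is skew-symmetric with respect to $(\cdot,\cdot)$, and $([Y,Z]_{\mathfrak{m}}, Y) = 0$ for all $Z \in \mathfrak{g}$. -/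
import Mathlib


/-- Let `𝔤 = 𝔥 ⊕ 𝔪` be a reductive decomposition with `B(𝔥,𝔪) = 0` satisfying the
GO-property. Then for every `Y ∈ C_𝔤(𝔥) ∩ 𝔪` the operator `X ↦ [Y,X]_𝔪` on `𝔪` is
skew-symmetric for `(·,·)`, and `([Y,Z]_𝔪, Y) = 0` for all `Z ∈ 𝔤`. -/
theorem go_space_centralizer_elements_skew
    (L : Type*) [LieRing L] [LieAlgebra ℝ L] [FiniteDimensional ℝ L]
    (h : LieSubalgebra ℝ L) (m : Submodule ℝ L)
    (hcompl : IsCompl h.toSubmodule m)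
    (hadm : ∀ Z ∈ h, ∀ x ∈ m, ⁅Z, x⁆ ∈ m)
    (horthB : ∀ X ∈ h, ∀ y ∈ m, killingForm ℝ L X y = 0)
    (Φ : LinearMap.BilinForm ℝ L)
    (hΦsymm : ∀ x y : L, Φ x y = Φ y x)
    (hΦpos : ∀ x ∈ m, x ≠ 0 → 0 < Φ x x)
    (hΦinv : ∀ Z ∈ h, ∀ x ∈ m, ∀ y ∈ m, Φ ⁅Z, x⁆ y + Φ x ⁅Z, y⁆ = 0)
    (πm : L →ₗ[ℝ] L)
    (hπmem : ∀ x : L, πm x ∈ m) (hπid : ∀ x ∈ m, πm x = x) (hπh : ∀ x ∈ h, πm x = 0)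
    (hGO : ∀ X ∈ m, ∃ Z ∈ h, ∀ W ∈ m, Φ (πm ⁅X + Z, W⁆) X = 0) :
    ∀ Y ∈ m, (∀ W ∈ h, ⁅Y, W⁆ = 0) →
      (∀ X ∈ m, ∀ X' ∈ m, Φ (πm ⁅Y, X⁆) X' = - Φ (πm ⁅Y, X'⁆) X) ∧
        (∀ Z : L, Φ (πm ⁅Y, Z⁆) Y = 0) := by
  intro Y hYm hYc
  -- key: Φ (πm ⁅Y, X⁆) X = 0 for all X ∈ m
  have key : ∀ X ∈ m, Φ (πm ⁅Y, X⁆) X = 0 := by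
    intro X hX
    obtain ⟨Z, hZ, hGOX⟩ := hGO X hX
    have h1 := hGOX Y hYm
    have h2 : ⁅Z, Y⁆ = 0 := by
      rw [← lie_skew, hYc Z hZ, neg_zero]
    rw [add_lie, h2, add_zero] at h1
    rw [← lie_skew, map_neg, map_neg, LinearMap.neg_apply, h1, neg_zero]
  have skew : ∀ X ∈ m, ∀ X' ∈ m, Φ (πm ⁅Y, X⁆) X' = - Φ (πm ⁅Y, X'⁆) X := by
    intro X hX X' hX'
    have e := key (X + X') (m.add_mem hX hX')
    have eX := key X hX
    have eX' := key X' hX'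
    simp only [lie_add, map_add, LinearMap.add_apply] at e
    linarith
  refine ⟨skew, ?_⟩
  intro Z
  obtain ⟨a, ha, b, hb, rfl⟩ :
      ∃ a ∈ h.toSubmodule, ∃ b ∈ m, a + b = Z := by
    have := hcompl.sup_eq_top
    have hZ : Z ∈ h.toSubmodule ⊔ m := by rw [this]; trivial
    exact Submodule.mem_sup.mp hZ
  have h4 : ⁅Y, a⁆ = 0 := hYc a ha
  have h5 : ⁅Y, a + b⁆ = ⁅Y, b⁆ := by rw [lie_add, h4, zero_add]
  rw [h5]
  have := skew b hb Y hYm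
  simp only [lie_self, map_zero, LinearMap.zero_apply, neg_zero] at this
  exact this
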